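/- Let σ be a permutation of Fin n with cycle type (j_i(σ))_{i=1}^∞, and let σ × σ denote the permutation of Fin n × Fin n given by (a, a') ↦ (σ(a), σ(a')). Then the cycle type (j'_m)_{m=1}^∞ of σ × σ is given by j'_m = ∑_{(r,s) ∈ [n]², lcm(r,s) = m} gcd(r, s) · j_r(σ) · j_s(σ) for every positive integer m. -/

import Mathlib

/-- `cycleCount σ i` is the number of `i`-cycles in the disjoint cycle decomposition of the
permutation `σ` (fixed points counted as `1`-cycles). -/
noncomputable def cycleCount {X : Type*} (σ : Equiv.Perm X) (i : ℕ) : ℕ :=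
  Nat.card {a : X // Function.minimalPeriod (⇑σ) a = i} / i

section aux

open Function MulAction Subgroup

variable {X : Type*} [Fintype X] (σ : Equiv.Perm X)

lemma smul_fun_eq : (σ • · : X → X) = ⇑σ := rfl

lemma minPer_pos (x : X) : 0 < minimalPeriod (⇑σ) x := by
  rw [← smul_fun_eq σ, ← MulAction.period_eq_minimalPeriod]
  exact MulAction.period_pos_of_orderOf_pos (orderOf_pos σ) x

lemma card_orbit_eq (x : X) :
    Nat.card (MulAction.orbit (zpowers σ) x) = minimalPeriod (⇑σ) x := by
  rw [Nat.card_congr (orbitZPowersEquiv σ x), Nat.card_zmod, smul_fun_eq]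

lemma minPer_le_card (x : X) : minimalPeriod (⇑σ) x ≤ Fintype.card X := by
  rw [← card_orbit_eq σ x, ← Nat.card_eq_fintype_card]
  exact Nat.card_le_card_of_injective _ Subtype.val_injective

lemma minPer_orbit_const {x y : X} (h : y ∈ MulAction.orbit (zpowers σ) x) :
    minimalPeriod (⇑σ) y = minimalPeriod (⇑σ) x := by
  obtain ⟨⟨g, k, rfl⟩, rfl⟩ := h
  apply Function.minimalPeriod_eq_minimalPeriod_iff.mpr
  intro l
  rw [← smul_fun_eq σ, isPeriodicPt_smul_iff, isPeriodicPt_smul_iff]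
  have hc : σ ^ l • (σ ^ k • x) = σ ^ k • (σ ^ l • x) := by
    rw [smul_smul, smul_smul, ← zpow_natCast, ← zpow_add, ← zpow_add, add_comm]
  show σ ^ l • σ ^ k • x = σ ^ k • x ↔ σ ^ l • x = x
  rw [hc, (MulAction.injective (σ ^ k)).eq_iff]

lemma dvd_card_minPer (r : ℕ) :
    r ∣ Nat.card {x : X // minimalPeriod (⇑σ) x = r} := by
  classical
  rw [Nat.card_eq_fintype_card, Fintype.card_subtype]
  rw [Finset.card_eq_sum_card_fiberwise
    (f := fun x => (Quotient.mk'' x : orbitRel.Quotient (zpowers σ) X)) (t := Finset.univ)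
    (fun x _ => Finset.mem_univ _)]
  apply Finset.dvd_sum
  intro q _
  by_cases h : ∃ x₀, x₀ ∈ (Finset.univ.filter fun x => minimalPeriod (⇑σ) x = r).filter
      fun x => (Quotient.mk'' x : orbitRel.Quotient (zpowers σ) X) = q
  · obtain ⟨x₀, hx₀⟩ := h
    simp only [Finset.mem_filter, Finset.mem_univ, true_and] at hx₀
    obtain ⟨hper, hq⟩ := hx₀
    have heq : ((Finset.univ.filter fun x => minimalPeriod (⇑σ) x = r).filter
        fun x => (Quotient.mk'' x : orbitRel.Quotient (zpowers σ) X) = q)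
        = (MulAction.orbit (zpowers σ) x₀).toFinset := by
      ext y
      simp only [Finset.mem_filter, Finset.mem_univ, true_and, Set.mem_toFinset]
      constructor
      · rintro ⟨-, hyq⟩
        have : (Quotient.mk'' y : orbitRel.Quotient (zpowers σ) X) = Quotient.mk'' x₀ := by
          rw [hyq, hq]
        exact (MulAction.orbitRel_apply (G := zpowers σ)).mp (Quotient.eq''.mp this)
      · intro hy
        refine ⟨(minPer_orbit_const σ hy).trans hper, ?_⟩
        rw [← hq]
        exact Quotient.eq''.mpr ((MulAction.orbitRel_apply (G := zpowers σ)).mpr hy)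
    rw [heq, Set.toFinset_card, ← Nat.card_eq_fintype_card, card_orbit_eq σ x₀, hper]
  · push_neg at h
    rw [Finset.eq_empty_iff_forall_notMem.mpr h, Finset.card_empty]
    exact dvd_zero r

lemma card_minPer_eq (r : ℕ) :
    Nat.card {x : X // Function.minimalPeriod (⇑σ) x = r} = r * cycleCount σ r := by
  unfold cycleCount
  exact (Nat.mul_div_cancel' (dvd_card_minPer σ r)).symm

end aux

/-- The cycle type `(j'ₘ)` of the permutation `σ × σ` of `Fin n × Fin n` is given by
`j'ₘ = ∑_{(r,s) ∈ [n]², lcm(r,s) = m} gcd(r,s) jᵣ(σ) jₛ(σ)`, where `(jᵢ(σ))` is the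
cycle type of `σ`. -/
theorem cycleCount_prodCongr (n : ℕ) (σ : Equiv.Perm (Fin n)) (m : ℕ) (hm : 0 < m) :
    cycleCount (Equiv.prodCongr σ σ) m =
      ∑ p ∈ (Finset.Icc 1 n ×ˢ Finset.Icc 1 n).filter (fun p => Nat.lcm p.1 p.2 = m),
        Nat.gcd p.1 p.2 * cycleCount σ p.1 * cycleCount σ p.2 := by
  classical
  have hcoe : ⇑(Equiv.prodCongr σ σ) = Prod.map ⇑σ ⇑σ := by
    funext p; rfl
  have hper : ∀ p : Fin n × Fin n,
      Function.minimalPeriod (⇑(Equiv.prodCongr σ σ)) p =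
        Nat.lcm (Function.minimalPeriod (⇑σ) p.1) (Function.minimalPeriod (⇑σ) p.2) := by
    intro p
    rw [hcoe, Function.minimalPeriod_prodMap]
  -- main cardinality computation
  have hcard : Nat.card {p : Fin n × Fin n //
      Function.minimalPeriod (⇑(Equiv.prodCongr σ σ)) p = m} =
      ∑ p ∈ (Finset.Icc 1 n ×ˢ Finset.Icc 1 n).filter (fun p => Nat.lcm p.1 p.2 = m),
        (Nat.card {x : Fin n // Function.minimalPeriod (⇑σ) x = p.1}) *
        (Nat.card {x : Fin n // Function.minimalPeriod (⇑σ) x = p.2}) := by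
    rw [Nat.card_eq_fintype_card, Fintype.card_subtype]
    rw [Finset.card_eq_sum_card_fiberwise
      (f := fun p : Fin n × Fin n =>
        (Function.minimalPeriod (⇑σ) p.1, Function.minimalPeriod (⇑σ) p.2))
      (t := (Finset.Icc 1 n ×ˢ Finset.Icc 1 n).filter (fun p => Nat.lcm p.1 p.2 = m))
      ?_]
    · apply Finset.sum_congr rfl
      intro q hq
      simp only [Finset.mem_filter, Finset.mem_product, Finset.mem_Icc] at hq
      have hfib : ((Finset.univ.filter fun p : Fin n × Fin n =>
          Function.minimalPeriod (⇑(Equiv.prodCongr σ σ)) p = m).filter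
          fun p => (Function.minimalPeriod (⇑σ) p.1, Function.minimalPeriod (⇑σ) p.2) = q)
          = (Finset.univ.filter fun x : Fin n => Function.minimalPeriod (⇑σ) x = q.1) ×ˢ
            (Finset.univ.filter fun x : Fin n => Function.minimalPeriod (⇑σ) x = q.2) := by
        ext p
        simp only [Finset.mem_filter, Finset.mem_univ, true_and, Finset.mem_product,
          Prod.ext_iff, hper]
        constructor
        · rintro ⟨-, h1, h2⟩; exact ⟨h1, h2⟩
        · rintro ⟨h1, h2⟩
          exact ⟨by rw [h1, h2, hq.2], h1, h2⟩
      rw [hfib, Finset.card_product, Nat.card_eq_fintype_card, Nat.card_eq_fintype_card,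
        Fintype.card_subtype, Fintype.card_subtype]
    · intro p hp
      simp only [Finset.mem_coe, Finset.mem_filter, Finset.mem_univ, true_and] at hp
      simp only [Finset.mem_coe, Finset.mem_filter, Finset.mem_product, Finset.mem_Icc]
      refine ⟨⟨⟨minPer_pos σ p.1, ?_⟩, minPer_pos σ p.2, ?_⟩, ?_⟩
      · simpa using minPer_le_card σ p.1
      · simpa using minPer_le_card σ p.2
      · rw [← hper p, hp]
  -- now compute
  have key : Nat.card {p : Fin n × Fin n //
      Function.minimalPeriod (⇑(Equiv.prodCongr σ σ)) p = m} =
      m * ∑ p ∈ (Finset.Icc 1 n ×ˢ Finset.Icc 1 n).filter (fun p => Nat.lcm p.1 p.2 = m),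
        Nat.gcd p.1 p.2 * cycleCount σ p.1 * cycleCount σ p.2 := by
    rw [hcard, Finset.mul_sum]
    apply Finset.sum_congr rfl
    intro q hq
    simp only [Finset.mem_filter, Finset.mem_product, Finset.mem_Icc] at hq
    rw [card_minPer_eq, card_minPer_eq]
    have h1 : q.1 * q.2 = Nat.gcd q.1 q.2 * m := by
      rw [← hq.2, Nat.gcd_mul_lcm]
    calc q.1 * cycleCount σ q.1 * (q.2 * cycleCount σ q.2)
        = (q.1 * q.2) * (cycleCount σ q.1 * cycleCount σ q.2) := by ring
      _ = m * (Nat.gcd q.1 q.2 * cycleCount σ q.1 * cycleCount σ q.2) := by rw [h1]; ring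
  have hdef : cycleCount (Equiv.prodCongr σ σ) m =
      Nat.card {p : Fin n × Fin n //
        Function.minimalPeriod (⇑(Equiv.prodCongr σ σ)) p = m} / m := rfl
  rw [hdef, key, Nat.mul_div_cancel_left _ hm]
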